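/- Assume there exists a 3-capturing construction scheme ℱ on ω₁, and assume functions (h_α)_{α<ω₁} with h_α: α → {0,1} are constructed so that whenever F ∈ ℱ captures α₀ < α₁ < α₂ (with α_i ∈ F_i \ R(F) and α_j = φ_j(α₀)), one has h_{α₁}(α₀) = 1 and h_{α₂}(α₀) = 0 and h_{α₀} ⊆ h_{α₁}. Then the tree S = {h_α ↾ δ : δ ≤ α < ω₁} ordered by extension has no uncountable antichains and no uncountable chains, i.e., S is a Suslin tree. -/

import Mathlib

noncomputable section

/-- The set of countable ordinals, i.e. ordinals below `ω₁`. -/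
abbrev Omega1 : Type 1 := {o : Ordinal // o < (Cardinal.aleph 1).ord}

/-- `(D_i)_{i<N}` is an increasing Δ-system with root `R`. -/
def IncDeltaSystem {N : ℕ} (D : Fin N → Finset Omega1) (R : Finset Omega1) : Prop :=
  (∀ i, R ⊆ D i) ∧
  (∀ i j, i ≠ j → D i ∩ D j = R) ∧
  (∀ i j : Fin N, i < j →
    (∀ x ∈ R, ∀ y ∈ D i \ R, x < y) ∧
    (∀ x ∈ D i \ R, ∀ y ∈ D j \ R, x < y))

/-- A construction scheme of type `(m_k, n_k, r_k)_{k<ω}` on `ω₁`. -/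
structure ConstructionScheme (m n r : ℕ → ℕ) where
  mem : Set (Finset Omega1)
  cofinal : ∀ A : Finset Omega1, ∃ F ∈ mem, A ⊆ F
  rk : Finset Omega1 → ℕ
  root : Finset Omega1 → Finset Omega1
  card_eq : ∀ F ∈ mem, 0 < rk F → F.card = m (rk F)
  root_card : ∀ F ∈ mem, 0 < rk F → (root F).card = r (rk F)
  decomp : ∀ F ∈ mem, 0 < rk F →
    ∃! D : Fin (n (rk F)) → Finset Omega1,
      (∀ i, D i ∈ mem ∧ rk (D i) = rk F - 1) ∧
      (∀ x, x ∈ F ↔ ∃ i, x ∈ D i) ∧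
      IncDeltaSystem D (root F)

/-- `D` is the canonical decomposition of `F`. -/
def CanonDecomp {m n r : ℕ → ℕ} (S : ConstructionScheme m n r) (F : Finset Omega1)
    (D : Fin (n (S.rk F)) → Finset Omega1) : Prop :=
  (∀ i, D i ∈ S.mem ∧ S.rk (D i) = S.rk F - 1) ∧
  (∀ x, x ∈ F ↔ ∃ i, x ∈ D i) ∧
  IncDeltaSystem D (S.root F)

/-- `y` is the image of `x` under the unique order-preserving bijection `E → F`
(for `E, F` of the same cardinality). -/
def OrdMap (E F : Finset Omega1) (x y : Omega1) : Prop :=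
  x ∈ E ∧ y ∈ F ∧ (E.filter (fun z => z < x)).card = (F.filter (fun z => z < y)).card

/-- The construction scheme `S` is `p`-capturing. -/
def Capturing {m n r : ℕ → ℕ} (S : ConstructionScheme m n r) (p : ℕ) : Prop :=
  ∀ (s : Omega1 → Finset Omega1) (t : Finset Omega1),
    Function.Injective s →
    (∀ ξ η : Omega1, ξ ≠ η → s ξ ∩ s η = t) →
    (∀ ξ η : Omega1, ξ < η →
      (∀ x ∈ t, ∀ y ∈ s ξ \ t, x < y) ∧
      (∀ x ∈ s ξ \ t, ∀ y ∈ s η \ t, x < y)) →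
    ∃ (ξ : Fin p → Omega1) (F : Finset Omega1),
      StrictMono ξ ∧ F ∈ S.mem ∧ 0 < S.rk F ∧
      ∃ D : Fin (n (S.rk F)) → Finset Omega1, CanonDecomp S F D ∧
        t ⊆ S.root F ∧
        ∃ hp : p ≤ n (S.rk F), ∀ i : Fin p,
          s (ξ i) \ t ⊆ D (Fin.castLE hp i) \ S.root F ∧
          ∀ y : Omega1, y ∈ s (ξ i) \ t ↔
            ∃ x ∈ s (ξ ⟨0, i.pos⟩) \ t,
              OrdMap (D (Fin.castLE hp ⟨0, i.pos⟩)) (D (Fin.castLE hp i)) x y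

/-- An element of `2^{<ω₁}`: a binary function with domain an ordinal `δ < ω₁`
(represented as a total function vanishing at and above `dom`). -/
structure BSeq : Type 1 where
  dom : Omega1
  val : Omega1 → Bool
  zero_outside : ∀ x : Omega1, ¬ x < dom → val x = false

/-- `g` extends `f` in `2^{<ω₁}`. -/
def BSeq.Ext (f g : BSeq) : Prop :=
  f.dom ≤ g.dom ∧ ∀ x : Omega1, x < f.dom → g.val x = f.val x

/-- The restriction of `g` to the ordinal `δ`. -/
def BSeq.restrict (g : BSeq) (δ : Omega1) : BSeq :=
  ⟨δ, fun x => if x < δ then g.val x else false, by intro x hx; simp [if_neg hx]⟩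

open Cardinal Set

lemma omega1_isLimit : Order.IsSuccLimit ((Cardinal.aleph 1).ord) :=
  Cardinal.isSuccLimit_ord (Cardinal.aleph0_le_aleph 1)


instance : Nonempty Omega1 := ⟨⟨0, omega1_isLimit.pos⟩⟩

instance : Nonempty BSeq := ⟨⟨⟨0, omega1_isLimit.pos⟩, fun _ => false, fun _ _ => rfl⟩⟩

lemma cnt_lt (γ : Ordinal) (hγ : γ < (Cardinal.aleph 1).ord) :
    Set.Countable {x : Omega1 | x.1 < γ} := by
  have h1 : (Set.Iio γ).Countable := by
    rw [Cardinal.countable_iff_lt_aleph_one, Ordinal.mk_Iio_ordinal]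
    have h2 : γ.card < Cardinal.aleph 1 := Cardinal.lt_ord.mp hγ
    calc Cardinal.lift.{1} γ.card < Cardinal.lift.{1} (Cardinal.aleph 1) :=
          Cardinal.lift_lt.mpr h2
      _ = Cardinal.aleph 1 := by
          rw [Cardinal.lift_aleph, Ordinal.lift_one]
  have : {x : Omega1 | x.1 < γ} = Subtype.val ⁻¹' Set.Iio γ := rfl
  rw [this]
  exact h1.preimage Subtype.val_injective

lemma bound_of_countable (T : Set Omega1) (hT : T.Countable) :
    ∃ β : Omega1, ∀ x ∈ T, x < β := by
  rcases T.eq_empty_or_nonempty with rfl | hne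
  · exact ⟨⟨0, omega1_isLimit.pos⟩, by simp⟩
  · obtain ⟨f, hf⟩ := hT.exists_eq_range hne
    have ho : ∀ n : ℕ, (f n).1 + 1 < (Cardinal.aleph 1).ord := fun n => by
      rw [Ordinal.add_one_eq_succ]; exact omega1_isLimit.succ_lt (f n).2
    refine ⟨⟨iSup (fun n => (f n).1 + 1), by
      have := Ordinal.iSup_lt_omega_one (f := fun n => (f n).1 + 1) (by simpa [Cardinal.ord_aleph] using ho)
      simpa [Cardinal.ord_aleph] using this⟩, ?_⟩
    rintro x hx
    rw [hf] at hx; obtain ⟨n, rfl⟩ := hx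
    show (f n).1 < iSup (fun n => (f n).1 + 1)
    calc (f n).1 < (f n).1 + 1 := by
          rw [Ordinal.add_one_eq_succ]; exact Order.lt_succ _
      _ ≤ _ := Ordinal.le_iSup (fun n => (f n).1 + 1) n

lemma unbounded_of_uncountable {B : Set Omega1} (hB : ¬ B.Countable) :
    ∀ β : Omega1, ∃ x ∈ B, β < x := by
  intro β
  by_contra hcon
  push_neg at hcon
  apply hB
  have hs : (β.1 + 1) < (Cardinal.aleph 1).ord := by
    rw [Ordinal.add_one_eq_succ]; exact omega1_isLimit.succ_lt β.2
  refine (cnt_lt (β.1 + 1) hs).mono ?_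
  intro x hx
  have : x ≤ β := hcon x hx
  calc x.1 ≤ β.1 := this
    _ < β.1 + 1 := by rw [Ordinal.add_one_eq_succ]; exact Order.lt_succ _

lemma exists_mono_choice (B : Set Omega1) (u : Omega1 → Omega1)
    (hB : ∀ β : Omega1, ∃ x ∈ B, β < x) :
    ∃ e : Omega1 → Omega1, (∀ ξ, e ξ ∈ B) ∧ ∀ η ξ, η < ξ → u (e η) < e ξ := by
  have wf : WellFounded ((· < ·) : Omega1 → Omega1 → Prop) := wellFounded_lt
  have step : ∀ (ξ : Omega1) (e' : ∀ η : Omega1, η < ξ → Omega1),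
      ∃ x ∈ B, ∀ η (hη : η < ξ), u (e' η hη) < x := by
    intro ξ e'
    have hcnt : Countable {η : Omega1 // η < ξ} := (cnt_lt ξ.1 ξ.2).to_subtype
    have hT : (Set.range (fun p : {η : Omega1 // η < ξ} => u (e' p.1 p.2))).Countable :=
      Set.countable_range _
    obtain ⟨β, hβ⟩ := bound_of_countable _ hT
    obtain ⟨x, hxB, hβx⟩ := hB β
    exact ⟨x, hxB, fun η hη => (hβ _ ⟨⟨η, hη⟩, rfl⟩).trans hβx⟩
  choose pick hpickB hpick using step
  refine ⟨wf.fix (fun ξ ih => pick ξ ih), ?_, ?_⟩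
  · intro ξ
    rw [wf.fix_eq]
    exact hpickB ξ _
  · intro η ξ hηξ
    conv_rhs => rw [wf.fix_eq]
    exact hpick ξ _ η hηξ

lemma BSeq_eq {f g : BSeq} (hd : f.dom = g.dom)
    (hv : ∀ x, x < f.dom → f.val x = g.val x) : f = g := by
  obtain ⟨d, v, hz⟩ := f
  obtain ⟨d', v', hz'⟩ := g
  simp only at hd hv
  subst hd
  have : v = v' := by
    funext x
    by_cases hx : x < d
    · exact hv x hx
    · rw [hz x hx, hz' x hx]
  subst this
  rfl

/-- Applying 3-capturing to the family of singletons of a strictly monotone `a`. -/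
lemma capture3 {m n r : ℕ → ℕ} (S : ConstructionScheme m n r)
    (hcap : Capturing S 3) (h : Omega1 → Omega1 → Bool)
    (hH : ∀ F ∈ S.mem, 0 < S.rk F →
      ∀ D : Fin (n (S.rk F)) → Finset Omega1, CanonDecomp S F D →
        ∀ h3 : 3 ≤ n (S.rk F), ∀ α : Fin 3 → Omega1, StrictMono α →
          (∀ i : Fin 3, α i ∈ D (Fin.castLE h3 i) \ S.root F) →
          (∀ i : Fin 3,
            OrdMap (D (Fin.castLE h3 ⟨0, Nat.zero_lt_succ 2⟩)) (D (Fin.castLE h3 i))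
              (α ⟨0, Nat.zero_lt_succ 2⟩) (α i)) →
          h (α 1) (α 0) = true ∧ h (α 2) (α 0) = false ∧
            ∀ x : Omega1, x < α 0 → h (α 1) x = h (α 0) x)
    (a : Omega1 → Omega1) (ha : StrictMono a) :
    ∃ ξ : Fin 3 → Omega1, StrictMono ξ ∧
      h (a (ξ 1)) (a (ξ 0)) = true ∧ h (a (ξ 2)) (a (ξ 0)) = false ∧
      ∀ x : Omega1, x < a (ξ 0) → h (a (ξ 1)) x = h (a (ξ 0)) x := by
  obtain ⟨ξ, F, hξ, hF, hrk, D, hD, -, hp, hcapt⟩ :=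
    hcap (fun ξ => {a ξ}) ∅
      (fun x y hxy => ha.injective (Finset.singleton_injective hxy))
      (fun ξ' η' hne => Finset.singleton_inter_of_notMem
        (by simp [ha.injective.ne hne]))
      (by
        intro ξ' η' hlt
        constructor
        · intro x hx; simp at hx
        · intro x hx y hy
          simp only [Finset.sdiff_empty, Finset.mem_singleton] at hx hy
          subst hx; subst hy; exact ha hlt)
  have hmem : ∀ i : Fin 3, a (ξ i) ∈ D (Fin.castLE hp i) \ S.root F := by
    intro i
    exact (hcapt i).1 (by simp)
  have hord : ∀ i : Fin 3,
      OrdMap (D (Fin.castLE hp ⟨0, by omega⟩)) (D (Fin.castLE hp i))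
        (a (ξ ⟨0, by omega⟩)) (a (ξ i)) := by
    intro i
    obtain ⟨x, hx, hOrd⟩ := ((hcapt i).2 (a (ξ i))).mp (by simp)
    simp only [Finset.sdiff_empty, Finset.mem_singleton] at hx
    subst hx
    exact hOrd
  obtain ⟨h1, h2, h3⟩ :=
    hH F hF hrk D hD hp (fun i => a (ξ i)) (ha.comp hξ) hmem hord
  exact ⟨ξ, hξ, h1, h2, h3⟩

/-- Given a 3-capturing construction scheme and functions `h_α : α → 2` coherent with
capturing as in the paper's construction, the tree `S = {h_α ↾ δ : δ ≤ α < ω₁}` has no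
uncountable antichains and no uncountable chains, i.e. it is a Suslin tree. -/
theorem stmt9 (m n r : ℕ → ℕ) (S : ConstructionScheme m n r)
    (hcap : Capturing S 3)
    (h : Omega1 → Omega1 → Bool)
    (hH : ∀ F ∈ S.mem, 0 < S.rk F →
      ∀ D : Fin (n (S.rk F)) → Finset Omega1, CanonDecomp S F D →
        ∀ h3 : 3 ≤ n (S.rk F), ∀ α : Fin 3 → Omega1, StrictMono α →
          (∀ i : Fin 3, α i ∈ D (Fin.castLE h3 i) \ S.root F) →
          (∀ i : Fin 3,
            OrdMap (D (Fin.castLE h3 ⟨0, by omega⟩)) (D (Fin.castLE h3 i))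
              (α ⟨0, by omega⟩) (α i)) →
          h (α 1) (α 0) = true ∧ h (α 2) (α 0) = false ∧
            ∀ x : Omega1, x < α 0 → h (α 1) x = h (α 0) x) :
    (∀ A ⊆ {f : BSeq | ∃ α : Omega1, f.dom ≤ α ∧ ∀ x : Omega1, x < f.dom → f.val x = h α x},
      (∀ f ∈ A, ∀ g ∈ A, f ≠ g → ¬ (BSeq.Ext f g ∨ BSeq.Ext g f)) → A.Countable) ∧
    (∀ C ⊆ {f : BSeq | ∃ α : Omega1, f.dom ≤ α ∧ ∀ x : Omega1, x < f.dom → f.val x = h α x},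
      (∀ f ∈ C, ∀ g ∈ C, BSeq.Ext f g ∨ BSeq.Ext g f) → C.Countable) := by
  constructor
  · -- no uncountable antichain
    intro A hA hanti
    by_contra hunc
    have hA' : ∀ f, f ∈ A → ∃ α : Omega1, f.dom ≤ α ∧
        ∀ x : Omega1, x < f.dom → f.val x = h α x := fun f hf => hA hf
    choose! w hw1 hw2 using hA'
    -- `w` is injective on `A`
    have winj : ∀ f ∈ A, ∀ g ∈ A, w f = w g → f = g := by
      intro f hf g hg hfg
      by_contra hne
      apply hanti f hf g hg hne
      rcases le_total f.dom g.dom with hle | hle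
      · exact Or.inl ⟨hle, fun x hx => by
          rw [hw2 g hg x (lt_of_lt_of_le hx hle), ← hfg, ← hw2 f hf x hx]⟩
      · exact Or.inr ⟨hle, fun x hx => by
          rw [hw2 f hf x (lt_of_lt_of_le hx hle), hfg, ← hw2 g hg x hx]⟩
    set B : Set Omega1 := {α | ∃ f ∈ A, w f = α} with hBdef
    have hBunc : ¬ B.Countable := by
      intro hc
      apply hunc
      haveI : Countable B := hc.to_subtype
      rw [← Set.countable_coe_iff]
      have hinj : Function.Injective
          (fun f : A => (⟨w f.1, f.1, f.2, rfl⟩ : B)) := by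
        intro f g hfg
        simp only [Subtype.mk.injEq] at hfg
        exact Subtype.ext (winj f.1 f.2 g.1 g.2 hfg)
      exact hinj.countable
    obtain ⟨e, heB, hemono⟩ :=
      exists_mono_choice B id (unbounded_of_uncountable hBunc)
    have emono : StrictMono e := fun η ξ hh => hemono η ξ hh
    obtain ⟨ξ, hξ, -, -, hcoh⟩ := capture3 S hcap h hH e emono
    obtain ⟨f₀, hf₀, hwf₀⟩ := heB (ξ 0)
    obtain ⟨f₁, hf₁, hwf₁⟩ := heB (ξ 1)
    have h01 : e (ξ 0) < e (ξ 1) := emono (hξ (by decide))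
    have hne : f₀ ≠ f₁ := by
      intro hfe
      rw [hfe, hwf₁] at hwf₀
      exact absurd hwf₀ (ne_of_gt h01)
    apply hanti f₀ hf₀ f₁ hf₁ hne
    have hd₀ : f₀.dom ≤ e (ξ 0) := hwf₀ ▸ hw1 f₀ hf₀
    have hd₁ : f₁.dom ≤ e (ξ 1) := hwf₁ ▸ hw1 f₁ hf₁
    rcases le_total f₀.dom f₁.dom with hle | hle
    · refine Or.inl ⟨hle, fun x hx => ?_⟩
      rw [hw2 f₁ hf₁ x (lt_of_lt_of_le hx hle), hwf₁,
        hcoh x (lt_of_lt_of_le hx hd₀), ← hwf₀, ← hw2 f₀ hf₀ x hx]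
    · refine Or.inr ⟨hle, fun x hx => ?_⟩
      rw [hw2 f₀ hf₀ x (lt_of_lt_of_le hx hle), hwf₀,
        ← hcoh x (lt_of_lt_of_le (lt_of_lt_of_le hx hle) hd₀), ← hwf₁,
        ← hw2 f₁ hf₁ x hx]
  · -- no uncountable chain
    intro C hC hch
    by_contra hunc
    have hC' : ∀ f, f ∈ C → ∃ α : Omega1, f.dom ≤ α ∧
        ∀ x : Omega1, x < f.dom → f.val x = h α x := fun f hf => hC hf
    choose! w hw1 hw2 using hC'
    -- `dom` is injective on `C`
    have dinj : ∀ f ∈ C, ∀ g ∈ C, f.dom = g.dom → f = g := by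
      intro f hf g hg hfg
      rcases hch f hf g hg with hext | hext
      · exact BSeq_eq hfg (fun x hx => (hext.2 x hx).symm)
      · exact (BSeq_eq hfg.symm (fun x hx => (hext.2 x hx).symm)).symm
    set B : Set Omega1 := {δ | ∃ f ∈ C, f.dom = δ} with hBdef
    have hBunc : ¬ B.Countable := by
      intro hc
      apply hunc
      haveI : Countable B := hc.to_subtype
      rw [← Set.countable_coe_iff]
      have hinj : Function.Injective
          (fun f : C => (⟨f.1.dom, f.1, f.2, rfl⟩ : B)) := by
        intro f g hfg
        simp only [Subtype.mk.injEq] at hfg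
        exact Subtype.ext (dinj f.1 f.2 g.1 g.2 hfg)
      exact hinj.countable
    have hpick : ∀ δ : Omega1, δ ∈ B → ∃ f, f ∈ C ∧ f.dom = δ := by
      intro δ hδ; obtain ⟨f, hf, hfd⟩ := hδ; exact ⟨f, hf, hfd⟩
    choose! G hG1 hG2 using hpick
    classical
    set u : Omega1 → Omega1 := fun δ => if δ ∈ B then w (G δ) else δ with hudef
    obtain ⟨e, heB, hemono⟩ :=
      exists_mono_choice B u (unbounded_of_uncountable hBunc)
    have hue : ∀ ξ : Omega1, u (e ξ) = w (G (e ξ)) := by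
      intro ξ; rw [hudef]; simp [heB ξ]
    have hle_u : ∀ ξ : Omega1, e ξ ≤ u (e ξ) := by
      intro ξ
      rw [hue ξ]
      have := hw1 (G (e ξ)) (hG1 (e ξ) (heB ξ))
      rwa [hG2 (e ξ) (heB ξ)] at this
    set a : Omega1 → Omega1 := fun ξ => u (e ξ) with hadef
    have hamono : StrictMono a := fun η ξ hh =>
      lt_of_lt_of_le (hemono η ξ hh) (hle_u ξ)
    obtain ⟨ξ, hξ, h1, h2, -⟩ := capture3 S hcap h hH a hamono
    set f₁ := G (e (ξ 1)) with hf₁def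
    set f₂ := G (e (ξ 2)) with hf₂def
    have hf₁ : f₁ ∈ C := hG1 _ (heB _)
    have hf₂ : f₂ ∈ C := hG1 _ (heB _)
    have hdom₁ : f₁.dom = e (ξ 1) := hG2 _ (heB _)
    have hdom₂ : f₂.dom = e (ξ 2) := hG2 _ (heB _)
    have ha₁ : w f₁ = a (ξ 1) := (hue _).symm
    have ha₂ : w f₂ = a (ξ 2) := (hue _).symm
    have hlt₁ : a (ξ 0) < f₁.dom := by
      rw [hdom₁]; exact hemono (ξ 0) (ξ 1) (hξ (by decide))
    have hlt₂ : a (ξ 0) < f₂.dom := by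
      rw [hdom₂]; exact hemono (ξ 0) (ξ 2) (hξ (by decide))
    have hv₁ : f₁.val (a (ξ 0)) = true := by
      rw [hw2 f₁ hf₁ _ hlt₁, ha₁]; exact h1
    have hv₂ : f₂.val (a (ξ 0)) = false := by
      rw [hw2 f₂ hf₂ _ hlt₂, ha₂]; exact h2
    rcases hch f₁ hf₁ f₂ hf₂ with hext | hext
    · rw [hext.2 _ hlt₁, hv₁] at hv₂; exact absurd hv₂ (by simp)
    · rw [hext.2 _ hlt₂, hv₂] at hv₁; exact absurd hv₁ (by simp)
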